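/- Let A ∈ ℝ^{m×n} have columns a_1,…,a_n, let b ∈ ℝ^m with b ≠ 0, let p ∈ (0,1) and λ > 0. If λ ≥ β(1) := (2α/(p(1−p)))^{p/2} ‖b‖₂^{2−p}, where α = max_{1≤i≤n} ‖a_i‖₂², then x = 0 is the unique global minimizer of f_p over ℝ^n. -/

import Mathlib

open Real Finset

lemma keylog {p : ℝ} (hp0 : 0 < p) (hp1 : p < 1) :
    (2 - 3*p/2) * Real.log 2 + (p/2) * Real.log p + (1 - p/2) * Real.log (1-p)
      < (2 - p) * Real.log (2 - p) := by
  have h1p : (0:ℝ) < 1 - p := by linarith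
  have h2p : (0:ℝ) < 2 - p := by linarith
  have hs : 2 * Real.sqrt (1 - p) ≤ 2 - p := by
    nlinarith [Real.sq_sqrt h1p.le, Real.sqrt_nonneg (1-p), sq_nonneg (Real.sqrt (1-p) - 1)]
  have h1 : Real.log 2 + Real.log (1-p) / 2 ≤ Real.log (2 - p) := by
    have := Real.log_le_log (by positivity) hs
    rwa [Real.log_mul (by norm_num) (Real.sqrt_ne_zero'.2 h1p), Real.log_sqrt h1p.le] at this
  have h2 : Real.log p < Real.log 2 := Real.log_lt_log hp0 (by linarith)
  have h1' := mul_le_mul_of_nonneg_left h1 h2p.le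
  have h2' := mul_lt_mul_of_pos_left h2 (by linarith : (0:ℝ) < p/2)
  nlinarith [h1', h2']

set_option maxHeartbeats 1600000 in
lemma core {p lam alpha B T s : ℝ} (hp0 : 0 < p) (hp1 : p < 1) (hlam : 0 < lam)
    (hB : 0 < B) (halpha : 0 ≤ alpha) (hT : 0 < T) (hs : 0 ≤ s)
    (hs2 : s^2 ≤ alpha * T^2)
    (hlb : (2*alpha/(p*(1-p)))^(p/2) * B^(2-p) ≤ lam) :
    2*B*s < lam * T^p + s^2 := by
  have hTp : 0 < T^p := Real.rpow_pos_of_pos hT p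
  have h1p : (0:ℝ) < 1 - p := by linarith
  have h2p : (0:ℝ) < 2 - p := by linarith
  rcases eq_or_lt_of_le halpha with hα | hα
  · have hs0 : s = 0 := by nlinarith
    rw [hs0]
    have : 0 < lam * T^p := by positivity
    nlinarith
  have hq : (0:ℝ) < p * (1-p) := by positivity
  have hbase : (0:ℝ) < 2*alpha/(p*(1-p)) := by positivity
  have hβ : (0:ℝ) < (2*alpha/(p*(1-p)))^(p/2) * B^(2-p) := by positivity
  have hlamlog : (p/2) * (Real.log 2 + Real.log alpha - Real.log p - Real.log (1-p))
      + (2-p) * Real.log B ≤ Real.log lam := by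
    have h := Real.log_le_log hβ hlb
    rw [Real.log_mul (Real.rpow_pos_of_pos hbase _).ne' (Real.rpow_pos_of_pos hB _).ne',
      Real.log_rpow hbase, Real.log_rpow hB,
      Real.log_div (by positivity) hq.ne', Real.log_mul two_ne_zero hα.ne',
      Real.log_mul hp0.ne' h1p.ne'] at h
    linarith
  rcases le_or_gt (B^2) (alpha*T^2) with hcase | hcase
  · -- B² ≤ αT² : use 2Bs ≤ B² + s² and B² < lam T^p
    have hBT : 2*Real.log B ≤ Real.log alpha + 2*Real.log T := by
      have h := Real.log_le_log (by positivity) hcase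
      rw [Real.log_pow, Real.log_mul hα.ne' (by positivity), Real.log_pow] at h
      push_cast at h
      linarith
    have key : B^2 < lam * T^p := by
      have hq2 : Real.log p + Real.log (1-p) < Real.log 2 := by
        have h : Real.log (p*(1-p)) < Real.log 2 := Real.log_lt_log hq (by nlinarith)
        rwa [Real.log_mul hp0.ne' h1p.ne'] at h
      have hlog : Real.log (B^2) < Real.log (lam * T^p) := by
        rw [Real.log_pow, Real.log_mul hlam.ne' hTp.ne', Real.log_rpow hT]
        push_cast
        nlinarith [mul_le_mul_of_nonneg_left hBT (by linarith : (0:ℝ) ≤ p/2),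
          mul_lt_mul_of_pos_left hq2 (by linarith : (0:ℝ) < p/2), hlamlog]
      exact (Real.log_lt_log_iff (by positivity) (by positivity)).1 hlog
    nlinarith [sq_nonneg (B - s)]
  · -- αT² < B²
    set σ := Real.sqrt alpha * T with hσdef
    have hσ0 : 0 ≤ σ := by positivity
    have hσ2 : σ^2 = alpha * T^2 := by
      rw [hσdef, mul_pow, Real.sq_sqrt halpha]
    have hsσ : s ≤ σ := by nlinarith
    have hσB : σ < B := by nlinarith
    have mono : 2*B*s - s^2 ≤ 2*B*σ - σ^2 := by
      nlinarith [mul_nonneg (sub_nonneg.2 hsσ) (by linarith : (0:ℝ) ≤ 2*B - σ - s)]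
    set w : ℝ := 1/(2-p) with hw
    have hw0 : 0 < w := by positivity
    have h1w : 1 - w = (1-p)/(2-p) := by
      rw [hw]; field_simp; ring
    have h1w0 : 0 < 1 - w := by rw [h1w]; positivity
    set C := (lam/w)^w * (alpha/(1-w))^(1-w) with hC
    have hCpos : 0 < C :=
      mul_pos (Real.rpow_pos_of_pos (by positivity) _)
        (Real.rpow_pos_of_pos (div_pos hα h1w0) _)
    have amgm : C * T ≤ lam * T^p + alpha * T^2 := by
      have h := Real.geom_mean_le_arith_mean2_weighted hw0.le h1w0.le
        (by positivity : (0:ℝ) ≤ lam*T^p/w)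
        (div_nonneg (by positivity) h1w0.le : (0:ℝ) ≤ alpha*T^2/(1-w)) (by ring)
      have hrhs : w * (lam*T^p/w) + (1-w)*(alpha*T^2/(1-w)) = lam*T^p + alpha*T^2 := by
        field_simp
      have hlhs : (lam*T^p/w)^w * (alpha*T^2/(1-w))^(1-w) = C * T := by
        have e1 : lam*T^p/w = (lam/w) * T^p := by ring
        have e2 : alpha*T^2/(1-w) = (alpha/(1-w)) * T^(2:ℝ) := by
          rw [show T^(2:ℝ) = T^(2:ℕ) from by rw [← Real.rpow_natCast T 2]; norm_num]
          ring
        rw [e1, e2, Real.mul_rpow (by positivity) hTp.le,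
          Real.mul_rpow (div_nonneg halpha h1w0.le) (by positivity),
          ← Real.rpow_mul hT.le, ← Real.rpow_mul hT.le]
        have e3 : p * w = 1 - (2:ℝ) * (1-w) := by
          rw [hw]; field_simp; ring
        rw [hC, e3, mul_mul_mul_comm, ← Real.rpow_add hT]
        norm_num
      rw [hlhs, hrhs] at h
      exact h
    have hkey : 2*B*Real.sqrt alpha < C := by
      have hlogC : (2-p) * Real.log C
          = Real.log lam + (2-p)*Real.log (2-p)
            + (1-p)*(Real.log alpha - Real.log (1-p)) := by
        rw [hC, Real.log_mul (Real.rpow_pos_of_pos (by positivity) _).ne'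
            (Real.rpow_pos_of_pos (div_pos hα h1w0) _).ne',
          Real.log_rpow (by positivity), Real.log_rpow (div_pos hα h1w0),
          h1w, hw, Real.log_div hlam.ne' (by positivity : (1/(2-p):ℝ) ≠ 0)]
        rw [Real.log_div one_ne_zero h2p.ne', Real.log_one,
          Real.log_div hα.ne' ((div_pos h1p h2p).ne'),
          Real.log_div h1p.ne' h2p.ne']
        field_simp
        ring
      have hlogL : Real.log (2*B*Real.sqrt alpha)
          = Real.log 2 + Real.log B + Real.log alpha / 2 := by
        rw [Real.log_mul (by positivity) (Real.sqrt_ne_zero'.2 hα),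
          Real.log_mul two_ne_zero hB.ne', Real.log_sqrt halpha]
      have hmul : (2-p)*Real.log (2*B*Real.sqrt alpha) < (2-p)*Real.log C := by
        rw [hlogC, hlogL]
        nlinarith [keylog hp0 hp1, hlamlog]
      exact (Real.log_lt_log_iff (by positivity) hCpos).1 ((mul_lt_mul_iff_right₀ h2p).1 hmul)
    have hfin : 2*B*σ < C * T := by
      rw [hσdef, show 2*B*(Real.sqrt alpha*T) = (2*B*Real.sqrt alpha)*T by ring]
      exact mul_lt_mul_of_pos_right hkey hT
    linarith


/-- The objective `f_p(x) = ‖Ax − b‖₂² + λ Σ_i |x_i|^p`. -/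
noncomputable def fp (m n : ℕ) (A : Matrix (Fin m) (Fin n) ℝ) (b : Fin m → ℝ)
    (lam p : ℝ) (x : Fin n → ℝ) : ℝ :=
  (∑ i, (A.mulVec x i - b i) ^ 2) + lam * ∑ i, |x i| ^ p

lemma my_rpow_add_le {x y p : ℝ} (hx : 0 ≤ x) (hy : 0 ≤ y) (hp : 0 ≤ p) (hp1 : p ≤ 1) :
    (x + y) ^ p ≤ x ^ p + y ^ p := by
  have h := NNReal.rpow_add_le_add_rpow x.toNNReal y.toNNReal hp hp1
  have h' := NNReal.coe_le_coe.2 h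
  push_cast [Real.coe_toNNReal x hx, Real.coe_toNNReal y hy] at h'
  exact h'

lemma my_sum_rpow {ι : Type*} (s : Finset ι) (f : ι → ℝ) (hf : ∀ i, 0 ≤ f i)
    {p : ℝ} (hp0 : 0 < p) (hp1 : p ≤ 1) :
    (∑ i ∈ s, f i) ^ p ≤ ∑ i ∈ s, f i ^ p := by
  classical
  induction s using Finset.cons_induction with
  | empty => simp [Real.zero_rpow hp0.ne']
  | cons a s ha ih =>
      rw [Finset.sum_cons, Finset.sum_cons]
      calc (f a + ∑ i ∈ s, f i) ^ p ≤ f a ^ p + (∑ i ∈ s, f i) ^ p :=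
            my_rpow_add_le (hf a) (Finset.sum_nonneg fun i _ => hf i) hp0.le hp1
        _ ≤ f a ^ p + ∑ i ∈ s, f i ^ p := by linarith

/-- If `λ ≥ β(1) = (2α/(p(1−p)))^(p/2) ‖b‖^(2−p)`, where `α = max_i ‖a_i‖²` is the
largest squared column norm of `A`, then `x = 0` is the unique global minimizer
of `f_p`. -/
theorem stmt_1 (m n : ℕ) (A : Matrix (Fin m) (Fin n) ℝ) (b : Fin m → ℝ)
    (hb : b ≠ 0) (p lam : ℝ) (hp0 : 0 < p) (hp1 : p < 1) (hlam : 0 < lam)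
    (alpha : ℝ)
    (halpha : IsGreatest (Set.range fun i : Fin n => ∑ j, A j i ^ 2) alpha)
    (hlb : lam ≥ (2 * alpha / (p * (1 - p))) ^ (p / 2) *
      Real.sqrt (∑ i, b i ^ 2) ^ (2 - p)) :
    (∀ y : Fin n → ℝ, fp m n A b lam p 0 ≤ fp m n A b lam p y) ∧
      ∀ x : Fin n → ℝ, (∀ y : Fin n → ℝ, fp m n A b lam p x ≤ fp m n A b lam p y) →
        x = 0 := by
  have hα0 : 0 ≤ alpha := by
    obtain ⟨i, hi⟩ := halpha.1
    rw [← hi]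
    positivity
  have hub : ∀ i, ∑ j, A j i ^ 2 ≤ alpha := fun i => halpha.2 ⟨i, rfl⟩
  have hbsum : 0 < ∑ i, b i ^ 2 := by
    obtain ⟨j, hj⟩ := Function.ne_iff.1 hb
    exact Finset.sum_pos' (fun i _ => sq_nonneg _)
      ⟨j, Finset.mem_univ j, pow_two_pos_of_ne_zero hj⟩
  set B := Real.sqrt (∑ i, b i ^ 2) with hBdef
  have hB : 0 < B := Real.sqrt_pos.2 hbsum
  have hfp0 : fp m n A b lam p 0 = ∑ i, b i ^ 2 := by
    simp [fp, Matrix.mulVec_zero, Real.zero_rpow hp0.ne', neg_sq]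
  -- main strict inequality
  have main : ∀ x : Fin n → ℝ, x ≠ 0 → fp m n A b lam p 0 < fp m n A b lam p x := by
    intro x hx
    obtain ⟨i0, hi0⟩ := Function.ne_iff.1 hx
    set T := ∑ i, |x i| with hTdef
    have hT : 0 < T := Finset.sum_pos' (fun i _ => abs_nonneg _)
      ⟨i0, Finset.mem_univ i0, abs_pos.2 hi0⟩
    set S2 := ∑ j, A.mulVec x j ^ 2 with hS2def
    have hS2nn : 0 ≤ S2 := Finset.sum_nonneg fun j _ => sq_nonneg _
    set s := Real.sqrt S2 with hsdef
    have hs0 : 0 ≤ s := Real.sqrt_nonneg _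
    have hs2 : s ^ 2 = S2 := Real.sq_sqrt hS2nn
    -- Cauchy-Schwarz
    have hcs : ∑ j, A.mulVec x j * b j ≤ s * B := by
      simpa [hsdef, hS2def, hBdef] using
        Real.sum_mul_le_sqrt_mul_sqrt Finset.univ (fun j => A.mulVec x j) b
    -- column bound : S2 ≤ alpha * T^2
    have hj : ∀ j, (∑ i, A j i * x i) ^ 2 ≤ T * ∑ i, A j i ^ 2 * |x i| := by
      intro j
      have h := Finset.sum_mul_sq_le_sq_mul_sq Finset.univ
        (fun i => Real.sqrt |x i|) (fun i => A j i * x i / Real.sqrt |x i|)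
      have e1 : ∀ i : Fin n,
          Real.sqrt |x i| * (A j i * x i / Real.sqrt |x i|) = A j i * x i := by
        intro i
        by_cases hxi : x i = 0
        · simp [hxi]
        · have hne : Real.sqrt |x i| ≠ 0 := by
            simp [Real.sqrt_ne_zero', abs_pos, hxi]
          field_simp
      have e2 : ∀ i : Fin n, (Real.sqrt |x i|) ^ 2 = |x i| := fun i =>
        Real.sq_sqrt (abs_nonneg _)
      have e3 : ∀ i : Fin n,
          (A j i * x i / Real.sqrt |x i|) ^ 2 = A j i ^ 2 * |x i| := by
        intro i
        by_cases hxi : x i = 0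
        · simp [hxi]
        · have habs : |x i| ≠ 0 := abs_ne_zero.2 hxi
          rw [div_pow, Real.sq_sqrt (abs_nonneg _), mul_pow, ← sq_abs (x i)]
          field_simp
      calc (∑ i, A j i * x i) ^ 2
          = (∑ i, Real.sqrt |x i| * (A j i * x i / Real.sqrt |x i|)) ^ 2 := by
            rw [Finset.sum_congr rfl fun i _ => e1 i]
        _ ≤ (∑ i, (Real.sqrt |x i|) ^ 2) * ∑ i, (A j i * x i / Real.sqrt |x i|) ^ 2 := h
        _ = T * ∑ i, A j i ^ 2 * |x i| := by
            rw [Finset.sum_congr rfl fun i _ => e2 i, Finset.sum_congr rfl fun i _ => e3 i]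
    have hmv : ∀ j, A.mulVec x j = ∑ i, A j i * x i := by
      intro j
      simp [Matrix.mulVec, dotProduct]
    have hcol : S2 ≤ alpha * T ^ 2 := by
      have h1 : S2 ≤ ∑ j, (T * ∑ i, A j i ^ 2 * |x i|) := by
        rw [hS2def]
        refine Finset.sum_le_sum fun j _ => ?_
        rw [hmv j]
        exact hj j
      have h2 : ∑ j, (T * ∑ i, A j i ^ 2 * |x i|) = T * ∑ i, (∑ j, A j i ^ 2) * |x i| := by
        rw [← Finset.mul_sum, Finset.sum_comm]
        congr 1
        refine Finset.sum_congr rfl fun i _ => ?_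
        rw [Finset.sum_mul]
      have h3 : ∑ i, (∑ j, A j i ^ 2) * |x i| ≤ ∑ i, alpha * |x i| :=
        Finset.sum_le_sum fun i _ => mul_le_mul_of_nonneg_right (hub i) (abs_nonneg _)
      have h4 : ∑ i, alpha * |x i| = alpha * T := by rw [← Finset.mul_sum]
      calc S2 ≤ T * ∑ i, (∑ j, A j i ^ 2) * |x i| := by rw [← h2]; exact h1
        _ ≤ T * (alpha * T) := by
            refine mul_le_mul_of_nonneg_left ?_ hT.le
            rw [← h4] at *
            exact h3
        _ = alpha * T ^ 2 := by ring
    -- subadditivity of t^p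
    have hsum : T ^ p ≤ ∑ i, |x i| ^ p :=
      my_sum_rpow Finset.univ (fun i => |x i|) (fun i => abs_nonneg _) hp0 hp1.le
    -- expansion
    have hexp : ∑ j, (A.mulVec x j - b j) ^ 2
        = S2 - 2 * (∑ j, A.mulVec x j * b j) + ∑ j, b j ^ 2 := by
      rw [hS2def, Finset.mul_sum, ← Finset.sum_sub_distrib, ← Finset.sum_add_distrib]
      exact Finset.sum_congr rfl fun j _ => by ring
    -- core inequality
    have hcore : 2 * B * s < lam * T ^ p + s ^ 2 := by
      refine core hp0 hp1 hlam hB hα0 hT hs0 ?_ hlb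
      rw [hs2]; exact hcol
    have hlamT : lam * T ^ p ≤ lam * ∑ i, |x i| ^ p :=
      mul_le_mul_of_nonneg_left hsum hlam.le
    rw [hfp0]
    show (∑ i, b i ^ 2) < fp m n A b lam p x
    rw [fp, hexp]
    have : ∑ j, A.mulVec x j * b j ≤ s * B := hcs
    nlinarith [hs2, hcore, hlamT, hcs]
  constructor
  · intro y
    by_cases hy : y = 0
    · rw [hy]
    · exact (main y hy).le
  · intro x hxmin
    by_contra hne
    have h1 := main x hne
    have h2 := hxmin 0
    linarith
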